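/- Let k > 1 and let f : ℝ → ℝ be a positive, continuously differentiable function with f(0) > k. Suppose I, R : ℝ → ℝ are differentiable and satisfy, for all t ≥ 0, I'(t) = I(t)·(f(R(t))·(1 − I(t) − R(t)) − k) and R'(t) = (k−1)·I(t) − R(t), with I(0) ≥ 0 and R(0) ≥ 0, and suppose (I(t), R(t)) → (0, 0) as t → ∞. Then I(t) = 0 for all t ≥ 0. -/

import Mathlib

open Filter MeasureTheory intervalIntegral

/-- When f(0) > k, the stable manifold of the disease-free equilibrium is the
axis I = 0: any nonnegative solution converging to (0,0) must have I ≡ 0. -/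
theorem sir_stable_manifold_is_axis
    (k : ℝ) (hk : 1 < k)
    (f : ℝ → ℝ) (hf_pos : ∀ x, 0 < f x) (hf_smooth : ContDiff ℝ 1 f)
    (hf0 : k < f 0)
    (I R : ℝ → ℝ)
    (hI : Differentiable ℝ I) (hR : Differentiable ℝ R)
    (hIode : ∀ t, 0 ≤ t → deriv I t = I t * (f (R t) * (1 - I t - R t) - k))
    (hRode : ∀ t, 0 ≤ t → deriv R t = (k - 1) * I t - R t)
    (hI0 : 0 ≤ I 0) (hR0 : 0 ≤ R 0)
    (hconv : Filter.Tendsto (fun t => (I t, R t)) Filter.atTop (nhds (0, 0))) :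
    ∀ t, 0 ≤ t → I t = 0 := by
  set g : ℝ → ℝ := fun t => f (R t) * (1 - I t - R t) - k with hg_def
  have hfc : Continuous f := hf_smooth.continuous
  have hIc : Continuous I := hI.continuous
  have hRc : Continuous R := hR.continuous
  have hg_cont : Continuous g := by
    rw [hg_def]; fun_prop
  set G : ℝ → ℝ := fun t => ∫ s in (0:ℝ)..t, g s with hG_def
  have hG_deriv : ∀ t, HasDerivAt G (g t) t := by
    intro t
    exact integral_hasDerivAt_right (hg_cont.intervalIntegrable 0 t)
      hg_cont.aestronglyMeasurable.stronglyMeasurableAtFilter hg_cont.continuousAt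
  -- key formula : I t = I 0 * exp (G t) for t ≥ 0
  have key : ∀ t, 0 ≤ t → I t = I 0 * Real.exp (G t) := by
    intro t ht
    set h : ℝ → ℝ := fun s => I s * Real.exp (-(G s)) with hh_def
    have hderiv : ∀ s, 0 ≤ s → HasDerivAt h 0 s := by
      intro s hs
      have h1 : HasDerivAt I (I s * g s) s := by
        have := (hI s).hasDerivAt
        rwa [hIode s hs] at this
      have h2 : HasDerivAt (fun u => Real.exp (-(G u))) (-(g s) * Real.exp (-(G s))) s := by
        have := ((hG_deriv s).neg).exp
        simpa [mul_comm] using this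
      have := h1.mul h2
      have e : I s * g s * Real.exp (-(G s)) + I s * (-(g s) * Real.exp (-(G s))) = 0 := by ring
      rwa [e] at this
    have hconst : ∀ x ∈ Set.Icc (0:ℝ) t, h x = h 0 := by
      apply constant_of_has_deriv_right_zero
      · have hGc : Continuous G := continuous_iff_continuousAt.mpr fun t => ((hG_deriv t).differentiableAt).continuousAt
        exact (hIc.mul (hGc.neg.rexp)).continuousOn
      · intro y hy
        exact (hderiv y hy.1).hasDerivWithinAt
    have := hconst t ⟨le_refl 0 |>.trans ht, le_refl t⟩
    have hG0 : G 0 = 0 := by simp [hG_def]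
    simp only [hh_def, hG0, neg_zero, Real.exp_zero, mul_one] at this
    have h2 := congrArg (fun x => x * Real.exp (G t)) this
    simp only [mul_assoc, ← Real.exp_add, neg_add_cancel, Real.exp_zero, mul_one] at h2
    exact h2
  rcases eq_or_lt_of_le hI0 with h0 | h0
  · intro t ht; rw [key t ht, ← h0, zero_mul]
  · -- I 0 > 0 leads to contradiction
    exfalso
    -- g tends to f 0 - k > 0
    have hgt : Tendsto g atTop (nhds (f 0 - k)) := by
      have hc : Continuous (fun p : ℝ × ℝ => f p.2 * (1 - p.1 - p.2) - k) :=
        ((hfc.comp continuous_snd).mul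
          ((continuous_const.sub continuous_fst).sub continuous_snd)).sub continuous_const
      have := (hc.tendsto ((0:ℝ), (0:ℝ))).comp hconv
      simpa [hg_def, Function.comp_def] using this
    set c : ℝ := (f 0 - k) / 2 with hc_def
    have hcpos : 0 < c := by rw [hc_def]; linarith
    have hev : ∀ᶠ t in atTop, c ≤ g t :=
      hgt.eventually (eventually_ge_nhds (by linarith))
    obtain ⟨T₀, hT₀⟩ := hev.exists_forall_of_atTop
    set T : ℝ := max T₀ 0 with hT_def
    have hT0 : (0:ℝ) ≤ T := le_max_right _ _
    have hITpos : 0 < I T := by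
      rw [key T hT0]; positivity
    -- I t ≥ I T for t ≥ T
    have hmono : ∀ t, T ≤ t → I T ≤ I t := by
      intro t ht
      rw [key t (hT0.trans ht), key T hT0]
      have hGdiff : G T ≤ G t := by
        have hsub : G t - G T = ∫ s in T..t, g s := by
          rw [hG_def]
          exact (intervalIntegral.integral_interval_sub_left
            (hg_cont.intervalIntegrable 0 t) (hg_cont.intervalIntegrable 0 T))
        have hnn : 0 ≤ ∫ s in T..t, g s := by
          apply intervalIntegral.integral_nonneg ht
          intro s hs
          have : c ≤ g s := hT₀ s (le_trans (le_max_left _ _) hs.1)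
          linarith
        linarith
      have := Real.exp_le_exp.mpr hGdiff
      nlinarith [Real.exp_pos (G T), Real.exp_pos (G t), h0]
    -- but I t → 0 < I T, contradiction
    have hItend : Tendsto I atTop (nhds 0) := by
      have := (continuous_fst.tendsto ((0:ℝ),(0:ℝ))).comp hconv
      simpa [Function.comp_def] using this
    have hlt : ∀ᶠ t in atTop, I t < I T :=
      hItend.eventually (eventually_lt_nhds hITpos)
    obtain ⟨t, ht1, ht2⟩ := (hlt.and (eventually_ge_atTop T)).exists
    exact absurd (hmono t ht2) (not_le.mpr ht1)
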